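/- arXiv:1710.02937 — 2 statements merged into one kernel-verified Lean document; each statement's English description precedes it below -/
import Mathlib

section
/- Let Φ be a unital positive linear map, and A, B strictly positive operators with mA ≤ B ≤ MA for 0 < m < M, and p ∈ [-1,0). Then Φ(T_p(A|B)) ≥ T_p(Φ(A)|Φ(B)) + (C(m,M,p)/p)·Φ(A), where T_p(A|B) = (A ♯_p B - A)/p and C(m,M,p) is the difference-type Kantorovich constant. -/
/-- The weighted geometric-type mean `A ♯_p B = A^(1/2) (A^(-1/2) B A^(-1/2))^p A^(1/2)`. -/
noncomputable def sharpPow {H : Type*} [NormedAddCommGroup H] [InnerProductSpace ℂ H]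
    [CompleteSpace H] (p : ℝ) (A B : H →L[ℂ] H) : H →L[ℂ] H :=
  cfc (fun t : ℝ => t ^ (1 / 2 : ℝ)) A *
    cfc (fun t : ℝ => t ^ p) (cfc (fun t : ℝ => t ^ (-(1 / 2) : ℝ)) A * B *
      cfc (fun t : ℝ => t ^ (-(1 / 2) : ℝ)) A) *
    cfc (fun t : ℝ => t ^ (1 / 2 : ℝ)) A

/-- The Tsallis relative operator entropy `T_p(A|B) = (A ♯_p B - A) / p`. -/
noncomputable def tsallis {H : Type*} [NormedAddCommGroup H] [InnerProductSpace ℂ H]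
    [CompleteSpace H] (p : ℝ) (A B : H →L[ℂ] H) : H →L[ℂ] H :=
  p⁻¹ • (sharpPow p A B - A)



open Real Set

section Scalar

lemma scalar_main {m M p : ℝ} (hm : 0 < m) (hmM : m < M) (hp0 : p < 0) :
    ∃ ξ ∈ Ioo m M, p * ξ ^ (p-1) = (M ^ p - m ^ p) / (M - m) ∧
      (∀ t ∈ Icc m M, t ^ p ≤ (M ^ p - m ^ p) / (M - m) * t + (M * m ^ p - m * M ^ p) / (M - m)) ∧
      (∀ t ∈ Icc m M, (M ^ p - m ^ p) / (M - m) * t + (M * m ^ p - m * M ^ p) / (M - m)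
        ≤ t ^ p + ((M * m ^ p - m * M ^ p) / (M - m) + (p - 1) * ξ ^ p)) := by
  have hMm : (0:ℝ) < M - m := by linarith
  set α := (M ^ p - m ^ p) / (M - m) with hα
  set β := (M * m ^ p - m * M ^ p) / (M - m) with hβ
  have hcont : ContinuousOn (fun t : ℝ => t ^ p) (Icc m M) := fun t ht =>
    ((Real.hasDerivAt_rpow_const (p := p) (Or.inl (by nlinarith [ht.1] : t ≠ 0))).continuousAt).continuousWithinAt
  have hderiv : ∀ t ∈ Ioo m M, HasDerivAt (fun t : ℝ => t ^ p) (p * t ^ (p-1)) t := by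
    intro t ht
    have : t ≠ 0 := by nlinarith [ht.1]
    simpa [mul_comm] using Real.hasDerivAt_rpow_const (p := p) (Or.inl this)
  obtain ⟨ξ, hξ, hξ'⟩ := exists_hasDerivAt_eq_slope (fun t : ℝ => t ^ p)
    (fun t => p * t ^ (p-1)) hmM hcont hderiv
  have hξ0 : (0:ℝ) < ξ := lt_trans hm hξ.1
  set h : ℝ → ℝ := fun t => α * t + β - t ^ p with hh
  have hhd : ∀ t ∈ Ioo (0:ℝ) (M+1), HasDerivAt h (α - p * t ^ (p-1)) t := by
    intro t ht
    have ht0 : t ≠ 0 := ne_of_gt ht.1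
    have h1 : HasDerivAt (fun t : ℝ => α * t + β) α t := by
      simpa using ((hasDerivAt_id t).const_mul α).add_const β
    exact h1.sub (by simpa [mul_comm] using Real.hasDerivAt_rpow_const (p := p) (Or.inl ht0))
  have hconth : ContinuousOn h (Icc m M) := fun t ht =>
    (hhd t ⟨lt_of_lt_of_le hm ht.1, lt_of_le_of_lt ht.2 (by linarith)⟩).continuousAt.continuousWithinAt
  have hderivsign : ∀ t ∈ Ioo (0:ℝ) (M+1), deriv h t = p * (ξ ^ (p-1) - t ^ (p-1)) := by
    intro t ht
    rw [(hhd t ht).deriv, hα, ← hξ']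
    ring
  have hsub1 : Icc m ξ ⊆ Icc m M := Icc_subset_Icc le_rfl hξ.2.le
  have hmemIoo : ∀ t ∈ Ioo m ξ, t ∈ Ioo (0:ℝ) (M+1) := fun t ht =>
    ⟨lt_trans hm ht.1, by linarith [ht.2, hξ.2]⟩
  have hmemIoo' : ∀ t ∈ Ioo ξ M, t ∈ Ioo (0:ℝ) (M+1) := fun t ht =>
    ⟨lt_trans hξ0 ht.1, by linarith [ht.2]⟩
  have hmono : MonotoneOn h (Icc m ξ) := by
    have hdiff : DifferentiableOn ℝ h (interior (Icc m ξ)) := by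
      rw [interior_Icc]
      exact fun t ht => ((hhd t (hmemIoo t ht)).differentiableAt).differentiableWithinAt
    refine monotoneOn_of_deriv_nonneg (convex_Icc m ξ) (hconth.mono hsub1) hdiff ?_
    intro t ht
    rw [interior_Icc] at ht
    rw [hderivsign t (hmemIoo t ht)]
    have h2 : ξ ^ (p-1) ≤ t ^ (p-1) :=
      Real.rpow_le_rpow_of_nonpos (lt_trans hm ht.1) ht.2.le (by linarith)
    nlinarith
  have hanti : AntitoneOn h (Icc ξ M) := by
    have hdiff : DifferentiableOn ℝ h (interior (Icc ξ M)) := by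
      rw [interior_Icc]
      exact fun t ht => ((hhd t (hmemIoo' t ht)).differentiableAt).differentiableWithinAt
    refine antitoneOn_of_deriv_nonpos (convex_Icc ξ M) (hconth.mono (Icc_subset_Icc hξ.1.le le_rfl)) hdiff ?_
    intro t ht
    rw [interior_Icc] at ht
    rw [hderivsign t (hmemIoo' t ht)]
    have h2 : t ^ (p-1) ≤ ξ ^ (p-1) :=
      Real.rpow_le_rpow_of_nonpos hξ0 ht.1.le (by linarith)
    nlinarith
  have hm0 : h m = 0 := by
    simp only [hh, hα, hβ]; field_simp; ring
  have hM0 : h M = 0 := by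
    simp only [hh, hα, hβ]; field_simp; ring
  have hξval : h ξ = β + (p - 1) * ξ ^ p := by
    have e1 : ξ ^ (p-1) * ξ = ξ ^ p := by
      rw [← Real.rpow_add_one (ne_of_gt hξ0) (p-1)]
      norm_num
    have e2 : α * ξ = p * ξ ^ p := by
      rw [hα, ← hξ']; rw [mul_assoc, e1]
    simp only [hh]
    rw [e2]; ring
  refine ⟨ξ, hξ, hξ', ?_, ?_⟩
  · intro t ht
    have key : 0 ≤ h t := by
      rcases le_total t ξ with hc | hc
      · have := hmono ⟨le_rfl, hξ.1.le⟩ ⟨ht.1, hc⟩ ht.1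
        linarith [hm0 ▸ this]
      · have := hanti ⟨hc, ht.2⟩ ⟨hξ.2.le, le_rfl⟩ ht.2
        linarith [hM0 ▸ this]
    simp only [hh] at key; linarith
  · intro t ht
    have key : h t ≤ h ξ := by
      rcases le_total t ξ with hc | hc
      · exact hmono ⟨ht.1, hc⟩ ⟨hξ.1.le, le_rfl⟩ hc
      · exact hanti ⟨le_rfl, hξ.2.le⟩ ⟨hc, ht.2⟩ hc
    rw [hξval] at key
    simp only [hh] at key; linarith

end Scalar

section Operator

variable {A : Type*} [CStarAlgebra A] [PartialOrder A] [StarOrderedRing A]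

noncomputable def sqq (a : A) : A := cfc (fun t : ℝ => t ^ (1 / 2 : ℝ)) a
noncomputable def isqq (a : A) : A := cfc (fun t : ℝ => t ^ (-(1 / 2) : ℝ)) a

lemma spec_pos {a : A} (ha : 0 ≤ a) (hau : IsUnit a) : ∀ t ∈ spectrum ℝ a, (0:ℝ) < t := by
  intro x hx
  have h1 : 0 ≤ x := spectrum_nonneg_of_nonneg ha hx
  rcases h1.lt_or_eq with h|h
  · exact h
  · exact absurd hx (by simp [← h, spectrum.zero_notMem_iff ℝ |>.mpr hau])

lemma cont_rpow (r : ℝ) {a : A} (ha : 0 ≤ a) (hau : IsUnit a) :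
    ContinuousOn (fun t : ℝ => t ^ r) (spectrum ℝ a) := fun t ht =>
  (Real.continuousAt_rpow_const t r (Or.inl (ne_of_gt (spec_pos ha hau t ht)))).continuousWithinAt

lemma sqq_mul_isqq {a : A} (ha : 0 ≤ a) (hau : IsUnit a) : sqq a * isqq a = 1 := by
  rw [sqq, isqq, ← cfc_mul _ _ a (cont_rpow _ ha hau) (cont_rpow _ ha hau), ← cfc_one (R := ℝ) a]
  apply cfc_congr
  intro t ht
  have := spec_pos ha hau t ht
  simp only [Pi.one_apply]
  rw [← Real.rpow_add this]
  norm_num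

lemma isqq_mul_sqq {a : A} (ha : 0 ≤ a) (hau : IsUnit a) : isqq a * sqq a = 1 := by
  rw [sqq, isqq, ← cfc_mul _ _ a (cont_rpow _ ha hau) (cont_rpow _ ha hau), ← cfc_one (R := ℝ) a]
  apply cfc_congr
  intro t ht
  have := spec_pos ha hau t ht
  simp only [Pi.one_apply]
  rw [← Real.rpow_add this]
  norm_num

lemma sqq_mul_sqq {a : A} (ha : 0 ≤ a) (hau : IsUnit a) : sqq a * sqq a = a := by
  rw [sqq, ← cfc_mul _ _ a (cont_rpow _ ha hau) (cont_rpow _ ha hau)]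
  nth_rewrite 2 [← cfc_id (R := ℝ) a]
  apply cfc_congr
  intro t ht
  have := spec_pos ha hau t ht
  simp only [id_eq]
  rw [← Real.rpow_add this]
  norm_num

lemma sqq_sa (a : A) : IsSelfAdjoint (sqq a) := cfc_predicate _ a
lemma isqq_sa (a : A) : IsSelfAdjoint (isqq a) := cfc_predicate _ a

lemma isqq_conj_a {a : A} (ha : 0 ≤ a) (hau : IsUnit a) : isqq a * a * isqq a = 1 := by
  nth_rewrite 2 [← sqq_mul_sqq ha hau]
  rw [← mul_assoc, mul_assoc (isqq a * sqq a), isqq_mul_sqq ha hau, one_mul, sqq_mul_isqq ha hau]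

lemma sqq_conj_x {a b : A} (ha : 0 ≤ a) (hau : IsUnit a) :
    sqq a * (isqq a * b * isqq a) * sqq a = b := by
  rw [← mul_assoc, ← mul_assoc, sqq_mul_isqq ha hau, one_mul, mul_assoc, isqq_mul_sqq ha hau,
    mul_one]

lemma x_sa {a b : A} (hb : 0 ≤ b) : IsSelfAdjoint (isqq a * b * isqq a) := by
  have hbsa : IsSelfAdjoint b := .of_nonneg hb
  have hssa := isqq_sa (a := a)
  rw [IsSelfAdjoint, star_mul, star_mul, hbsa.star_eq, hssa.star_eq, mul_assoc]

lemma x_spec {a b : A} (ha : 0 ≤ a) (hau : IsUnit a) (hb : 0 ≤ b) {m M : ℝ}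
    (h1 : m • a ≤ b) (h2 : b ≤ M • a) :
    spectrum ℝ (isqq a * b * isqq a) ⊆ Set.Icc m M := by
  have hlow : m • (1 : A) ≤ isqq a * b * isqq a := by
    have := (isqq_sa (a := a)).conjugate_le_conjugate h1
    rwa [mul_smul_comm, smul_mul_assoc, isqq_conj_a ha hau] at this
  have hup : isqq a * b * isqq a ≤ M • (1 : A) := by
    have := (isqq_sa (a := a)).conjugate_le_conjugate h2
    rwa [mul_smul_comm, smul_mul_assoc, isqq_conj_a ha hau] at this
  intro t ht
  constructor
  · exact algebraMap_le_iff_le_spectrum (a := isqq a * b * isqq a) (x_sa hb) |>.mp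
      (by rw [Algebra.algebraMap_eq_smul_one]; exact hlow) t ht
  · exact le_algebraMap_iff_spectrum_le (a := isqq a * b * isqq a) (x_sa hb) |>.mp
      (by rw [Algebra.algebraMap_eq_smul_one]; exact hup) t ht

lemma conj_le {a b : A} (ha : 0 ≤ a) (hau : IsUnit a) (hb : 0 ≤ b) {m M : ℝ}
    (h1 : m • a ≤ b) (h2 : b ≤ M • a) {f g : ℝ → ℝ}
    (hf : ContinuousOn f (Set.Icc m M)) (hg : ContinuousOn g (Set.Icc m M))
    (hfg : ∀ t ∈ Set.Icc m M, f t ≤ g t) :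
    sqq a * cfc f (isqq a * b * isqq a) * sqq a ≤ sqq a * cfc g (isqq a * b * isqq a) * sqq a := by
  have hspec := x_spec ha hau hb h1 h2
  have : cfc f (isqq a * b * isqq a) ≤ cfc g (isqq a * b * isqq a) :=
    cfc_mono (fun t ht => hfg t (hspec ht)) (hf.mono hspec) (hg.mono hspec)
  exact (sqq_sa (a := a)).conjugate_le_conjugate this

lemma affine_eval {a b : A} (ha : 0 ≤ a) (hau : IsUnit a) (hb : 0 ≤ b) (c d : ℝ) :
    sqq a * cfc (fun t : ℝ => c * t + d) (isqq a * b * isqq a) * sqq a = c • b + d • a := by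
  have hxsa := x_sa (a := a) (b := b) hb
  have e1 : cfc (fun t : ℝ => c * t + d) (isqq a * b * isqq a)
      = c • (isqq a * b * isqq a) + d • (1 : A) := by
    rw [cfc_add (a := isqq a * b * isqq a) (fun t => c * t) (fun _ => d) (by fun_prop) (by fun_prop)]
    rw [cfc_const_mul_id c _ hxsa, cfc_const d _ hxsa, Algebra.algebraMap_eq_smul_one]
  rw [e1]
  rw [mul_add, add_mul, mul_smul_comm, smul_mul_assoc, mul_smul_comm, smul_mul_assoc]
  rw [sqq_conj_x ha hau, mul_one, sqq_mul_sqq ha hau]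

end Operator



set_option maxHeartbeats 1000000 in
/-- Difference-type complement for the Tsallis relative operator entropy. -/
theorem stmt_18 {H K : Type*}
    [NormedAddCommGroup H] [InnerProductSpace ℂ H] [CompleteSpace H]
    [NormedAddCommGroup K] [InnerProductSpace ℂ K] [CompleteSpace K]
    (Φ : (H →L[ℂ] H) →ₗ[ℂ] (K →L[ℂ] K))
    (hΦpos : ∀ T : H →L[ℂ] H, 0 ≤ T → 0 ≤ Φ T) (hΦunital : Φ 1 = 1)
    (A B : H →L[ℂ] H) (hA0 : 0 ≤ A) (hAu : IsUnit A) (hB0 : 0 ≤ B) (hBu : IsUnit B)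
    (m M : ℝ) (hm : 0 < m) (hmM : m < M)
    (hmA : m • A ≤ B) (hBM : B ≤ M • A)
    (p : ℝ) (hp1 : -1 ≤ p) (hp0 : p < 0) (C : ℝ)
    (hC : C =
      if ((M ^ p - m ^ p) / (p * (M - m))) ^ (1 / (p - 1)) ∈ Set.Icc m M then
        (M * m ^ p - m * M ^ p) / (M - m) +
          (p - 1) * ((M ^ p - m ^ p) / (p * (M - m))) ^ (p / (p - 1))
      else 0) :
    tsallis p (Φ A) (Φ B) + (C / p) • Φ A ≤ Φ (tsallis p A B) := by
  classical
  by_cases htriv : Subsingleton (K →L[ℂ] K)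
  · exact le_of_eq (Subsingleton.elim _ _)
  haveI hKnt : Nontrivial (K →L[ℂ] K) := not_subsingleton_iff_nontrivial.mp htriv
  haveI hHnt : Nontrivial (H →L[ℂ] H) := by
    refine nontrivial_of_ne 1 0 fun h10 => ?_
    have h1 : (1 : K →L[ℂ] K) = 0 := by rw [← hΦunital, h10, map_zero]
    exact one_ne_zero h1
  have hmono : ∀ X Y : H →L[ℂ] H, X ≤ Y → Φ X ≤ Φ Y := by
    intro X Y h
    have := hΦpos (Y - X) (sub_nonneg.mpr h)
    rw [map_sub] at this
    exact sub_nonneg.mp this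
  have hsmul : ∀ (r : ℝ) (X : H →L[ℂ] H), Φ (r • X) = r • Φ X := fun r X =>
    LinearMap.map_smul_of_tower Φ r X
  have hΦA0 : 0 ≤ Φ A := hΦpos A hA0
  have hΦB0 : 0 ≤ Φ B := hΦpos B hB0
  have hΦmA : m • Φ A ≤ Φ B := by rw [← hsmul]; exact hmono _ _ hmA
  have hΦBM : Φ B ≤ M • Φ A := by rw [← hsmul]; exact hmono _ _ hBM
  obtain ⟨ε, hε, hεle⟩ := (CFC.exists_pos_algebraMap_le_iff
    (a := A) (IsSelfAdjoint.of_nonneg hA0)).mpr (spec_pos hA0 hAu)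
  have hεΦ : algebraMap ℝ (K →L[ℂ] K) ε ≤ Φ A := by
    have h1 : Φ (algebraMap ℝ (H →L[ℂ] H) ε) = algebraMap ℝ (K →L[ℂ] K) ε := by
      rw [Algebra.algebraMap_eq_smul_one, Algebra.algebraMap_eq_smul_one, hsmul, hΦunital]
    rw [← h1]; exact hmono _ _ hεle
  have hΦAu : IsUnit (Φ A) := by
    rw [← spectrum.zero_notMem_iff ℝ]
    intro h0
    have := algebraMap_le_iff_le_spectrum (a := Φ A)
      (IsSelfAdjoint.of_nonneg hΦA0) |>.mp hεΦ 0 h0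
    linarith
  have hpne : p ≠ 0 := ne_of_lt hp0
  have hp1' : p - 1 < 0 := by linarith
  have hMm : (0:ℝ) < M - m := by linarith
  obtain ⟨ξ, hξmem, hξeq, hchord, hrev⟩ := scalar_main hm hmM hp0
  have hξpos : 0 < ξ := lt_trans hm hξmem.1
  set α := (M ^ p - m ^ p) / (M - m) with hα
  set β := (M * m ^ p - m * M ^ p) / (M - m) with hβ
  have hαp : (M ^ p - m ^ p) / (p * (M - m)) = ξ ^ (p-1) := by
    rw [div_mul_eq_div_div_swap, ← hα, ← hξeq]
    field_simp
  have hCval : C = β + (p - 1) * ξ ^ p := by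
    rw [hC, hαp]
    have ht1 : ((ξ:ℝ) ^ (p-1)) ^ (1/(p-1)) = ξ := by
      rw [← Real.rpow_mul hξpos.le, mul_one_div, div_self (ne_of_lt hp1'), Real.rpow_one]
    have ht2 : ((ξ:ℝ) ^ (p-1)) ^ (p/(p-1)) = ξ ^ p := by
      rw [← Real.rpow_mul hξpos.le]
      congr 1
      field_simp
      exact div_self (ne_of_lt hp1')
    rw [ht1, ht2]
    simp only [Set.mem_Icc]
    rw [if_pos (⟨hξmem.1.le, hξmem.2.le⟩ : m ≤ ξ ∧ ξ ≤ M)]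
  have hfc : ContinuousOn (fun t : ℝ => t ^ p) (Set.Icc m M) := fun t ht =>
    (Real.continuousAt_rpow_const t p (Or.inl (by nlinarith [ht.1] : t ≠ 0))).continuousWithinAt
  have hsharpA : sharpPow p A B
      = sqq A * cfc (fun t : ℝ => t ^ p) (isqq A * B * isqq A) * sqq A := rfl
  have ineq1 : sharpPow p A B ≤ α • B + β • A := by
    rw [hsharpA, ← affine_eval hA0 hAu hB0 α β]
    exact conj_le hA0 hAu hB0 hmA hBM hfc (by fun_prop) hchord
  have ineq1' : Φ (sharpPow p A B) ≤ α • Φ B + β • Φ A := by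
    have := hmono _ _ ineq1
    rwa [map_add, hsmul, hsmul] at this
  have hsharpK : sharpPow p (Φ A) (Φ B)
      = sqq (Φ A) * cfc (fun t : ℝ => t ^ p) (isqq (Φ A) * Φ B * isqq (Φ A)) * sqq (Φ A) := rfl
  have ineq2 : α • Φ B + β • Φ A ≤ sharpPow p (Φ A) (Φ B) + C • Φ A := by
    have hyspec := x_spec hΦA0 hΦAu hΦB0 hΦmA hΦBM
    have key := conj_le hΦA0 hΦAu hΦB0 hΦmA hΦBM (f := fun t => α * t + β)
      (g := fun t => t ^ p + C) (by fun_prop) (hfc.add continuousOn_const)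
      (by intro t ht; rw [hCval]; exact hrev t ht)
    rw [affine_eval hΦA0 hΦAu hΦB0 α β] at key
    have e2 : cfc (fun t : ℝ => t ^ p + C) (isqq (Φ A) * Φ B * isqq (Φ A))
        = cfc (fun t : ℝ => t ^ p) (isqq (Φ A) * Φ B * isqq (Φ A)) + C • 1 := by
      rw [cfc_add (a := isqq (Φ A) * Φ B * isqq (Φ A)) (fun t => t ^ p) (fun _ => C)
        (hfc.mono hyspec) (by fun_prop)]
      rw [cfc_const C _ (x_sa hΦB0), Algebra.algebraMap_eq_smul_one]
    rw [e2, mul_add, add_mul, mul_smul_comm, smul_mul_assoc, mul_one,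
      sqq_mul_sqq hΦA0 hΦAu] at key
    rw [hsharpK]
    exact key
  have main : Φ (sharpPow p A B) ≤ sharpPow p (Φ A) (Φ B) + C • Φ A := le_trans ineq1' ineq2
  have hD : 0 ≤ sharpPow p (Φ A) (Φ B) + C • Φ A - Φ (sharpPow p A B) := sub_nonneg.mpr main
  have hr : (0:ℝ) ≤ -p⁻¹ := by
    have : p⁻¹ < 0 := inv_lt_zero.mpr hp0
    linarith
  have hsm : 0 ≤ (-p⁻¹) • (sharpPow p (Φ A) (Φ B) + C • Φ A - Φ (sharpPow p A B)) := by
    set D := sharpPow p (Φ A) (Φ B) + C • Φ A - Φ (sharpPow p A B) with hDdef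
    have hc := star_left_conjugate_nonneg hD ((Real.sqrt (-p⁻¹) : ℝ) • (1 : K →L[ℂ] K))
    have hstar : star ((Real.sqrt (-p⁻¹) : ℝ) • (1 : K →L[ℂ] K))
        = (Real.sqrt (-p⁻¹) : ℝ) • (1 : K →L[ℂ] K) := by
      rw [star_smul, star_one, star_trivial]
    rwa [hstar, smul_mul_assoc, mul_smul_comm, one_mul, mul_one, smul_smul,
      Real.mul_self_sqrt hr] at hc
  have hΦT : Φ (tsallis p A B) = p⁻¹ • (Φ (sharpPow p A B) - Φ A) := by
    rw [tsallis, hsmul, map_sub]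
  rw [hΦT, tsallis, ← sub_nonneg]
  have heq : p⁻¹ • (Φ (sharpPow p A B) - Φ A)
        - (p⁻¹ • (sharpPow p (Φ A) (Φ B) - Φ A) + (C/p) • Φ A)
      = (-p⁻¹) • (sharpPow p (Φ A) (Φ B) + C • Φ A - Φ (sharpPow p A B)) := by
    rw [div_eq_mul_inv]
    module
  rw [heq]
  exact hsm
end

section
/- Scalar Kantorovich-type maximization: for 0 < m < M, p ≤ 0 and -1 ≤ q ≤ 0, the function h(t) = a·t^(1-q) + b·t^(-q) on [m,M], with a = (M^p - m^p)/(M-m) ≤ 0 and b = (M m^p - m M^p)/(M-m) ≥ 0, is concave on [m,M] (h'' ≤ 0), and its maximum over [m,M] equals (b/(1-q))·((1-q)a/(qb))^q provided t₀ = qb/((1-q)a) lies in [m,M]. -/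
open Real Set

lemma stmt19_deriv (a b q t : ℝ) (ht : 0 < t) :
    HasDerivAt (fun t : ℝ => a * t ^ (1 - q) + b * t ^ (-q))
      (t ^ (-q - 1) * ((1 - q) * a * t - q * b)) t := by
  have h1 := (Real.hasDerivAt_rpow_const (x := t) (p := 1 - q) (Or.inl ht.ne')).const_mul a
  have h2 := (Real.hasDerivAt_rpow_const (x := t) (p := -q) (Or.inl ht.ne')).const_mul b
  refine (h1.add h2).congr_deriv ?_
  have e1 : (1 - q) - 1 = -q := by ring
  have e2 : t ^ (-q) = t ^ (-q - 1) * t := by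
    rw [← Real.rpow_add_one ht.ne']; ring_nf
  rw [e1, e2]; ring

/-- Scalar Kantorovich-type maximization: `h(t) = a t^(1-q) + b t^(-q)` is concave on
`[m, M]`, and attains its maximum `(b/(1-q)) ((1-q)a/(qb))^q` at `t₀ = qb/((1-q)a)`
whenever `t₀ ∈ [m, M]`. -/
theorem stmt_19 (m M : ℝ) (hm : 0 < m) (hmM : m < M)
    (p q : ℝ) (hp : p ≤ 0) (hq1 : -1 ≤ q) (hq0 : q ≤ 0)
    (a b : ℝ) (ha : a = (M ^ p - m ^ p) / (M - m))
    (hb : b = (M * m ^ p - m * M ^ p) / (M - m)) :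
    a ≤ 0 ∧ 0 ≤ b ∧
    ConcaveOn ℝ (Set.Icc m M) (fun t => a * t ^ (1 - q) + b * t ^ (-q)) ∧
    (q * b / ((1 - q) * a) ∈ Set.Icc m M →
      IsGreatest ((fun t => a * t ^ (1 - q) + b * t ^ (-q)) '' Set.Icc m M)
        ((b / (1 - q)) * ((1 - q) * a / (q * b)) ^ q)) := by
  have hM : 0 < M := hm.trans hmM
  have hMm : 0 < M - m := by linarith
  have ha0 : a ≤ 0 := by
    rw [ha]
    apply div_nonpos_of_nonpos_of_nonneg _ hMm.le
    have := Real.rpow_le_rpow_of_nonpos hm hmM.le hp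
    linarith
  have hb0 : 0 ≤ b := by
    rw [hb]
    apply div_nonneg _ hMm.le
    have h1 : M ^ (p - 1) ≤ m ^ (p - 1) :=
      Real.rpow_le_rpow_of_nonpos hm hmM.le (by linarith)
    rw [Real.rpow_sub_one hM.ne', Real.rpow_sub_one hm.ne',
      div_le_div_iff₀ hM hm] at h1
    linarith
  have hconc : ConcaveOn ℝ (Set.Icc m M) (fun t => a * t ^ (1 - q) + b * t ^ (-q)) := by
    have h1 : ConcaveOn ℝ (Set.Ici 0) (fun t : ℝ => a * t ^ (1 - q)) := by
      have h := ((convexOn_rpow (p := 1 - q) (by linarith)).smul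
        (c := -a) (by linarith)).neg
      refine h.congr (fun t _ => ?_)
      simp only [Pi.neg_apply, Pi.smul_apply, smul_eq_mul]; ring
    have h2 : ConcaveOn ℝ (Set.Ici 0) (fun t : ℝ => b * t ^ (-q)) := by
      have h := (Real.concaveOn_rpow (p := -q) (by linarith) (by linarith)).smul
        (c := b) hb0
      refine h.congr (fun t _ => ?_)
      simp only [smul_eq_mul]
    exact (h1.add h2).subset (fun x hx => le_trans hm.le hx.1) (convex_Icc m M)
  refine ⟨ha0, hb0, hconc, fun ht => ?_⟩
  set t₀ := q * b / ((1 - q) * a) with ht₀def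
  have ht₀pos : 0 < t₀ := lt_of_lt_of_le hm ht.1
  have haneg : a < 0 := by
    rcases ha0.lt_or_eq with h | h
    · exact h
    · exfalso
      have : t₀ = 0 := by rw [ht₀def, h]; simp
      rw [this] at ht₀pos; exact lt_irrefl 0 ht₀pos
  have hqneg : q < 0 := by
    rcases hq0.lt_or_eq with h | h
    · exact h
    · exfalso
      have : t₀ = 0 := by rw [ht₀def, h]; simp
      rw [this] at ht₀pos; exact lt_irrefl 0 ht₀pos
  have hbpos : 0 < b := by
    rcases hb0.lt_or_eq with h | h
    · exact h
    · exfalso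
      have : t₀ = 0 := by rw [ht₀def, ← h]; simp
      rw [this] at ht₀pos; exact lt_irrefl 0 ht₀pos
  have h1q : 0 < 1 - q := by linarith
  have hden : (1 - q) * a ≠ 0 := by
    apply mul_ne_zero h1q.ne' haneg.ne
  -- value identity
  have hinv : (1 - q) * a / (q * b) = t₀⁻¹ := by
    rw [ht₀def]
    field_simp
  have hval : a * t₀ ^ (1 - q) + b * t₀ ^ (-q)
      = (b / (1 - q)) * ((1 - q) * a / (q * b)) ^ q := by
    have e1 : t₀ ^ (1 - q) = t₀ * t₀ ^ (-q) := by
      rw [show (1 : ℝ) - q = 1 + (-q) by ring, Real.rpow_add ht₀pos, Real.rpow_one]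
    have e2 : ((1 - q) * a / (q * b)) ^ q = t₀ ^ (-q) := by
      rw [hinv, Real.inv_rpow ht₀pos.le, ← Real.rpow_neg ht₀pos.le]
    rw [e1, e2]
    have e3 : a * t₀ + b = b / (1 - q) := by
      rw [ht₀def]; field_simp [haneg.ne, h1q.ne']; ring
    calc a * (t₀ * t₀ ^ (-q)) + b * t₀ ^ (-q) = (a * t₀ + b) * t₀ ^ (-q) := by ring
    _ = b / (1 - q) * t₀ ^ (-q) := by rw [e3]
  -- monotonicity on [m, t₀], antitonicity on [t₀, M]
  set f := fun t : ℝ => a * t ^ (1 - q) + b * t ^ (-q) with hf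
  have hcont : ∀ s : Set ℝ, s ⊆ Ioi 0 → ContinuousOn f s := fun s hs x hx =>
    (stmt19_deriv a b q x (hs hx)).continuousAt.continuousWithinAt
  have hdiff : ∀ s : Set ℝ, s ⊆ Ioi 0 → DifferentiableOn ℝ f s := fun s hs x hx =>
    (stmt19_deriv a b q x (hs hx)).differentiableAt.differentiableWithinAt
  have hmono : MonotoneOn f (Icc m t₀) := by
    apply monotoneOn_of_deriv_nonneg (convex_Icc m t₀)
      (hcont _ (fun x hx => lt_of_lt_of_le hm hx.1))
      (hdiff _ (fun x hx => lt_of_lt_of_le hm (interior_subset hx).1))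
    intro x hx
    rw [interior_Icc] at hx
    have hx0 : 0 < x := hm.trans hx.1
    rw [(stmt19_deriv a b q x hx0).deriv]
    apply mul_nonneg (Real.rpow_nonneg hx0.le _)
    have : (1 - q) * a * x ≥ (1 - q) * a * t₀ := by
      apply mul_le_mul_of_nonpos_left hx.2.le
      exact mul_nonpos_of_nonneg_of_nonpos h1q.le ha0
    have e3 : (1 - q) * a * t₀ = q * b := by
      rw [ht₀def]; field_simp [haneg.ne, h1q.ne']
    linarith
  have hanti : AntitoneOn f (Icc t₀ M) := by
    apply antitoneOn_of_deriv_nonpos (convex_Icc t₀ M)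
      (hcont _ (fun x hx => lt_of_lt_of_le ht₀pos hx.1))
      (hdiff _ (fun x hx => lt_of_lt_of_le ht₀pos (interior_subset hx).1))
    intro x hx
    rw [interior_Icc] at hx
    have hx0 : 0 < x := ht₀pos.trans hx.1
    rw [(stmt19_deriv a b q x hx0).deriv]
    apply mul_nonpos_of_nonneg_of_nonpos (Real.rpow_nonneg hx0.le _)
    have : (1 - q) * a * x ≤ (1 - q) * a * t₀ := by
      apply mul_le_mul_of_nonpos_left hx.1.le
      exact mul_nonpos_of_nonneg_of_nonpos h1q.le ha0
    have e3 : (1 - q) * a * t₀ = q * b := by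
      rw [ht₀def]; field_simp [haneg.ne, h1q.ne']
    linarith
  constructor
  · exact ⟨t₀, ht, hval⟩
  · rintro y ⟨t, htmem, rfl⟩
    rw [← hval]
    rcases le_total t t₀ with h | h
    · exact hmono ⟨htmem.1, h⟩ ⟨ht.1, le_refl _⟩ h
    · exact hanti ⟨le_refl _, ht.2⟩ ⟨h, htmem.2⟩ h
end
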